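/- arXiv:2505.15744 — 5 statements merged into one kernel-verified Lean document; each statement's English description precedes it below -/
import Mathlib

section
/- A finitely generated subgroup L of ℝⁿ is discrete if and only if the natural map L ⊗ ℝ → ℝⁿ is injective. -/
open Submodule Module

private lemma inj_iff_li {R M N ι : Type*} [CommRing R] [AddCommGroup M]
    [AddCommGroup N] [Module R M] [Module R N] (f : M →ₗ[R] N) (b : Basis ι R M) :
    Function.Injective f ↔ LinearIndependent R (f ∘ b) := by
  constructor
  · intro h
    exact b.linearIndependent.map' f (LinearMap.ker_eq_bot.2 h)
  · intro h x y hxy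
    have h2 : Finsupp.linearCombination R (f ∘ b) (b.repr x)
        = Finsupp.linearCombination R (f ∘ b) (b.repr y) := by
      rw [← Finsupp.apply_linearCombination, ← Finsupp.apply_linearCombination,
        b.linearCombination_repr, b.linearCombination_repr, hxy]
    exact b.repr.injective (h h2)

theorem stmt_2 (n : ℕ) (L : AddSubgroup (Fin n → ℝ)) (hFG : L.FG) :
    DiscreteTopology L ↔
      Function.Injective (LinearMap.liftBaseChange ℝ (L.subtype.toIntLinearMap)) := by
  classical
  have hfin : Module.Finite ℤ L :=
    Module.Finite.iff_addGroup_fg.mpr ((AddGroup.fg_iff_addSubgroup_fg L).mpr hFG)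
  have hnz : NoZeroSMulDivisors ℤ L := by
    refine ⟨fun {c x} h => ?_⟩
    have h' : c • (x : Fin n → ℝ) = 0 := by
      have := congrArg (Subtype.val) h
      push_cast at this
      simpa using this
    rcases smul_eq_zero.mp h' with h | h
    · exact Or.inl h
    · exact Or.inr (Subtype.ext h)
  have hfree : Module.Free ℤ L := Module.free_of_finite_type_torsion_free'
  set b := Module.Free.chooseBasis ℤ L with hb
  set ι := Module.Free.ChooseBasisIndex ℤ L
  -- Reduce injectivity to linear independence of the basis image
  have key : Function.Injective (LinearMap.liftBaseChange ℝ (L.subtype.toIntLinearMap))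
      ↔ LinearIndependent ℝ (fun i : ι => (b i : Fin n → ℝ)) := by
    rw [inj_iff_li _ (b.baseChange ℝ)]
    have heq : (LinearMap.liftBaseChange ℝ (L.subtype.toIntLinearMap)) ∘ ⇑(b.baseChange ℝ)
        = fun i : ι => (b i : Fin n → ℝ) := by
      funext i
      simp [Basis.baseChange_apply, LinearMap.liftBaseChange_tmul]
    rw [heq]
  rw [key]
  set M : Submodule ℤ (Fin n → ℝ) := AddSubgroup.toIntSubmodule L with hM
  constructor
  · -- discrete → linearly independent
    intro hd
    haveI hdM : DiscreteTopology M := hd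
    set F := span ℝ (M : Set (Fin n → ℝ)) with hF
    set f := F.subtype with hf
    set L₀ := M.comap (f.restrictScalars ℤ) with hL₀
    have h_img : f '' L₀ = M := by
      rw [← LinearMap.coe_restrictScalars ℤ f, ← Submodule.map_coe (f.restrictScalars ℤ),
        Submodule.map_comap_eq_self]
      exact fun x hx ↦ LinearMap.mem_range.mpr ⟨⟨x, Submodule.subset_span hx⟩, rfl⟩
    haveI hdL₀ : DiscreteTopology L₀ := by
      refine DiscreteTopology.preimage_of_continuous_injective (M : Set (Fin n → ℝ)) ?_
        (injective_subtype _)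
      exact LinearMap.continuous_of_finiteDimensional f
    haveI hzL₀ : IsZLattice ℝ L₀ := ⟨by
      rw [← (Submodule.map_injective_of_injective (injective_subtype _)).eq_iff,
        Submodule.map_span, Submodule.map_top, range_subtype, h_img]⟩
    -- transfer the basis to L₀
    let e : L₀ ≃ₗ[ℤ] L :=
      { toFun := fun x => ⟨(x : F), x.2⟩
        invFun := fun y => ⟨⟨(y : Fin n → ℝ), Submodule.subset_span y.2⟩, y.2⟩
        left_inv := fun x => rfl
        right_inv := fun y => rfl
        map_add' := fun x y => rfl
        map_smul' := fun c x => rfl }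
    let b₀ : Basis ι ℤ L₀ := b.map e.symm
    let c : Basis ι ℝ F := b₀.ofZLatticeBasis ℝ L₀
    have hli : LinearIndependent ℝ (⇑f ∘ ⇑c) :=
      c.linearIndependent.map' f (ker_subtype F)
    have hc : ⇑f ∘ ⇑c = fun i : ι => (b i : Fin n → ℝ) := by
      funext i
      simp only [Function.comp_apply, c, Basis.ofZLatticeBasis_apply]
      rfl
    rwa [hc] at hli
  · -- linearly independent → discrete
    intro hli
    have hli' := hli.linearIndepOn_id
    let c := Module.Basis.extend hli'
    haveI : Fintype (hli'.extend (Set.subset_univ _)) := FiniteDimensional.fintypeBasisIndex c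
    haveI : DiscreteTopology (span ℤ (Set.range ⇑c)) := inferInstance
    have hspan : span ℤ (Set.range (fun i : ι => (b i : Fin n → ℝ))) = M := by
      have himg : Set.range (fun i : ι => (b i : Fin n → ℝ))
          = ⇑M.subtype '' Set.range ⇑b := by
        ext x
        constructor
        · rintro ⟨i, rfl⟩; exact ⟨b i, ⟨i, rfl⟩, rfl⟩
        · rintro ⟨y, ⟨i, rfl⟩, rfl⟩; exact ⟨i, rfl⟩
      rw [himg, ← Submodule.map_span]
      erw [b.span_eq, Submodule.map_top, range_subtype]
    have hsub : Set.range (fun i : ι => (b i : Fin n → ℝ)) ⊆ Set.range ⇑c := by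
      rw [Basis.range_extend]
      exact hli'.subset_extend _
    have hle : M ≤ span ℤ (Set.range ⇑c) := by
      rw [← hspan]
      exact span_mono hsub
    let g : L → span ℤ (Set.range ⇑c) := fun x => ⟨(x : Fin n → ℝ), hle x.2⟩
    refine DiscreteTopology.of_continuous_injective (f := g)
      (Continuous.subtype_mk continuous_subtype_val _) ?_
    intro x y h
    have h2 : (g x).val = (g y).val := congrArg Subtype.val h
    exact Subtype.ext h2
end

section
/- If L is a finitely generated subgroup of ℝⁿ such that for every real subspace V of ℝⁿ of dimension d, the group L ∩ V can be generated by at most d elements, then L is discrete in ℝⁿ. -/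
theorem stmt_3 (n : ℕ) (L : AddSubgroup (Fin n → ℝ)) (hFG : L.FG)
    (h : ∀ V : Submodule ℝ (Fin n → ℝ), ∃ s : Finset (Fin n → ℝ),
      s.card ≤ Module.finrank ℝ V ∧
      AddSubgroup.closure (s : Set (Fin n → ℝ)) = L ⊓ V.toAddSubgroup) :
    DiscreteTopology L := by
  classical
  set V : Submodule ℝ (Fin n → ℝ) := Submodule.span ℝ (L : Set (Fin n → ℝ)) with hV
  obtain ⟨s, hcard, hclos⟩ := h V
  have hLV : L ≤ V.toAddSubgroup := fun x hx => Submodule.subset_span hx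
  have hclosL : AddSubgroup.closure (s : Set (Fin n → ℝ)) = L := by
    rw [hclos, inf_eq_left.mpr hLV]
  have hsub : (s : Set (Fin n → ℝ)) ⊆ L := by
    rw [← hclosL]; exact AddSubgroup.subset_closure
  have hspan : Submodule.span ℝ (s : Set (Fin n → ℝ)) = V := by
    apply le_antisymm
    · exact Submodule.span_le.mpr (fun x hx => Submodule.subset_span (hsub hx))
    · rw [hV]
      apply Submodule.span_le.mpr
      intro x hx
      have hx' : x ∈ AddSubgroup.closure (s : Set (Fin n → ℝ)) := hclosL ▸ hx
      have h2 : x ∈ Submodule.span ℤ (s : Set (Fin n → ℝ)) := by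
        rw [← Submodule.span_int_eq_addSubgroupClosure] at hx'
        exact hx'
      exact Submodule.span_subset_span ℤ ℝ _ h2
  -- s is linearly independent
  set S : Set (Fin n → ℝ) := (s : Set (Fin n → ℝ)) with hS
  haveI : Fintype S := FinsetCoe.fintype s
  have hli : LinearIndependent ℝ ((↑) : S → (Fin n → ℝ)) := by
    rw [linearIndependent_iff_card_le_finrank_span, Subtype.range_coe, Set.finrank, hspan]
    have : Fintype.card { x // x ∈ S } = s.card := by
      simp [hS, Fintype.card_coe]
    rw [this]; exact hcard
  -- extend to a basis of ℝⁿ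
  have hli' : LinearIndepOn ℝ id S := hli
  let b := Module.Basis.extend hli'
  haveI : Finite ↥(hli'.extend (Set.subset_univ S)) := by
    exact Module.Finite.finite_basis b
  have hLsub : (L : Set (Fin n → ℝ)) ⊆ (Submodule.span ℤ (Set.range b) : Set (Fin n → ℝ)) := by
    rw [← hclosL]
    have : AddSubgroup.closure (s : Set (Fin n → ℝ)) ≤
        (Submodule.span ℤ (Set.range b)).toAddSubgroup := by
      apply (AddSubgroup.closure_le _).mpr
      intro x hx
      rw [Module.Basis.range_extend]
      exact Submodule.subset_span (hli'.subset_extend _ hx)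
    exact this
  have hd : DiscreteTopology ((Submodule.span ℤ (Set.range (b : _ → Fin n → ℝ))) : Set (Fin n → ℝ)) :=
    (inferInstance : DiscreteTopology (Submodule.span ℤ (Set.range (b : _ → Fin n → ℝ))))
  exact DiscreteTopology.of_subset hd hLsub
end

section
/- If L is a closed additive subgroup of ℝⁿ, then the connected component of the identity L⁰ of L is a real linear subspace of ℝⁿ. -/
open Metric Filter

/-- A closed additive subgroup with nonzero elements of arbitrarily small norm contains a line. -/
lemma line_of_not_isolated {n : ℕ} (M : AddSubgroup (Fin n → ℝ))
    (hM : IsClosed (M : Set (Fin n → ℝ)))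
    (h : ∀ ε > 0, ∃ x ∈ M, x ≠ 0 ∧ ‖x‖ < ε) :
    ∃ u : Fin n → ℝ, u ≠ 0 ∧ ∀ t : ℝ, t • u ∈ M := by
  choose x hxM hx0 hxlt using fun k : ℕ => h (1 / (k + 1)) (by positivity)
  have hnorm : ∀ k, (0 : ℝ) < ‖x k‖ := fun k => norm_pos_iff.2 (hx0 k)
  set u : ℕ → Fin n → ℝ := fun k => ‖x k‖⁻¹ • x k with hu
  have husp : ∀ k, u k ∈ sphere (0 : Fin n → ℝ) 1 := by
    intro k
    simp [u, norm_smul, abs_of_pos (inv_pos.2 (hnorm k)),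
      inv_mul_cancel₀ (hnorm k).ne']
  obtain ⟨a, ha, φ, hφ, hconv⟩ := (isCompact_sphere (0 : Fin n → ℝ) 1).tendsto_subseq husp
  refine ⟨a, ?_, ?_⟩
  · intro h0
    rw [h0] at ha
    simpa using ha
  intro t
  -- the sequence of norms tends to 0
  have hnt : Tendsto (fun k => ‖x (φ k)‖) atTop (nhds 0) := by
    apply squeeze_zero (fun k => (hnorm _).le)
    · intro k
      exact (hxlt (φ k)).le.trans (by
        have : (k : ℝ) + 1 ≤ (φ k : ℝ) + 1 := by
          have := hφ.le_apply (x := k)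
          exact_mod_cast Nat.succ_le_succ this
        apply one_div_le_one_div_of_le (by positivity) this)
    · exact tendsto_one_div_add_atTop_nhds_zero_nat
  set s : ℕ → ℝ := fun k => (⌊t / ‖x (φ k)‖⌋ : ℝ) * ‖x (φ k)‖ with hs
  have hst : Tendsto s atTop (nhds t) := by
    rw [tendsto_iff_norm_sub_tendsto_zero]
    apply squeeze_zero (fun k => norm_nonneg _) (g := fun k => ‖x (φ k)‖) _ hnt
    intro k
    have hr := hnorm (φ k)
    have h1 : (⌊t / ‖x (φ k)‖⌋ : ℝ) ≤ t / ‖x (φ k)‖ := Int.floor_le _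
    have h2 : t / ‖x (φ k)‖ - 1 < ⌊t / ‖x (φ k)‖⌋ := Int.sub_one_lt_floor _
    have hA : s k ≤ t := by
      have := (le_div_iff₀ hr).1 h1
      simpa [hs] using this
    have hB : t < s k + ‖x (φ k)‖ := by
      have h3 : t / ‖x (φ k)‖ < (⌊t / ‖x (φ k)‖⌋ : ℝ) + 1 := by linarith
      have := (div_lt_iff₀ hr).1 h3
      simp only [hs]; nlinarith
    rw [Real.norm_eq_abs, abs_le]
    exact ⟨by linarith, by linarith⟩
  have hc : Tendsto (fun k => s k • u (φ k)) atTop (nhds (t • a)) := hst.smul hconv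
  have hmem : ∀ k, s k • u (φ k) ∈ M := by
    intro k
    have : s k • u (φ k) = ⌊t / ‖x (φ k)‖⌋ • x (φ k) := by
      rw [← Int.cast_smul_eq_zsmul ℝ, hs, hu]
      rw [smul_smul, mul_assoc, mul_inv_cancel₀ (hnorm (φ k)).ne', mul_one]
    rw [this]
    exact zsmul_mem (hxM (φ k)) _
  exact hM.mem_of_tendsto hc (Filter.Eventually.of_forall hmem)

theorem stmt_4 (n : ℕ) (L : AddSubgroup (Fin n → ℝ)) (hL : IsClosed (L : Set (Fin n → ℝ))) :
    ∃ V : Submodule ℝ (Fin n → ℝ),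
      connectedComponentIn (L : Set (Fin n → ℝ)) 0 = (V : Set (Fin n → ℝ)) := by
  classical
  set V : Submodule ℝ (Fin n → ℝ) :=
    { carrier := {x | ∀ t : ℝ, t • x ∈ L}
      add_mem' := fun {a b} ha hb t => by
        simpa [smul_add] using add_mem (ha t) (hb t)
      zero_mem' := fun t => by simpa using L.zero_mem
      smul_mem' := fun c x hx t => by simpa [smul_smul] using hx (t * c) } with hVdef
  refine ⟨V, ?_⟩
  have hVL : (V : Set (Fin n → ℝ)) ⊆ L := fun x hx => by simpa using hx 1
  obtain ⟨W, hW⟩ := Submodule.exists_isCompl V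
  set π : (Fin n → ℝ) →ₗ[ℝ] (Fin n → ℝ) :=
    W.subtype ∘ₗ (W.linearProjOfIsCompl V hW.symm) with hπdef
  have hπcont : Continuous π := π.continuous_of_finiteDimensional
  have hπW : ∀ x, π x ∈ W := fun x => (W.linearProjOfIsCompl V hW.symm x).2
  have hπV : ∀ x, x - π x ∈ V := by
    intro x
    have h : (V.linearProjOfIsCompl W hW x : Fin n → ℝ) + (W.linearProjOfIsCompl V hW.symm x : Fin n → ℝ) = x :=
      Submodule.projection_add_projection_eq_self hW x
    have : x - π x = (V.linearProjOfIsCompl W hW x : Fin n → ℝ) := by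
      simp only [hπdef, LinearMap.comp_apply, Submodule.subtype_apply]
      linear_combination -h
    rw [this]
    exact (V.linearProjOfIsCompl W hW x).2
  set M : AddSubgroup (Fin n → ℝ) := L ⊓ W.toAddSubgroup with hMdef
  have hMclosed : IsClosed (M : Set (Fin n → ℝ)) := by
    have : (M : Set (Fin n → ℝ)) = (L : Set _) ∩ (W : Set _) := rfl
    rw [this]
    exact hL.inter W.closed_of_finiteDimensional
  -- 0 is isolated in M
  have hiso : ∃ ε > 0, ∀ x ∈ M, ‖x‖ < ε → x = 0 := by
    by_contra hcon
    push_neg at hcon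
    obtain ⟨u, hu0, hu⟩ := line_of_not_isolated M hMclosed (by
      intro ε hε
      obtain ⟨x, hxM, hxlt, hx0⟩ := hcon ε hε
      exact ⟨x, hxM, hx0, hxlt⟩)
    have huV : u ∈ V := fun t => (hu t).1
    have huW : u ∈ W := by simpa using (hu 1).2
    exact hu0 (by simpa using Submodule.disjoint_def.1 hW.disjoint u huV huW)
  obtain ⟨ε, hε, hisol⟩ := hiso
  have h0L : (0 : Fin n → ℝ) ∈ (L : Set (Fin n → ℝ)) := L.zero_mem
  apply Set.Subset.antisymm
  · -- component ⊆ V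
    intro x hx
    set C := connectedComponentIn (L : Set (Fin n → ℝ)) 0 with hC
    have hCpre : IsPreconnected C := isPreconnected_connectedComponentIn
    have hCL : C ⊆ (L : Set _) := connectedComponentIn_subset _ _
    set S : Set (Fin n → ℝ) := π '' C with hSdef
    have hSpre : IsPreconnected S := hCpre.image _ hπcont.continuousOn
    have hSM : S ⊆ (M : Set _) := by
      rintro _ ⟨y, hy, rfl⟩
      refine ⟨?_, hπW y⟩
      have h1 : y - π y ∈ L := hVL (hπV y)
      have := sub_mem (hCL hy : y ∈ L) h1
      simpa using this
    have h0S : (0 : Fin n → ℝ) ∈ S :=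
      ⟨0, mem_connectedComponentIn h0L, map_zero π⟩
    -- S = {0} via preconnectedness
    have hSsub : S ⊆ {0} := by
      intro y hyS
      by_contra hy0
      have hynorm : ε ≤ ‖y‖ := by
        by_contra hlt
        exact hy0 (hisol y (hSM hyS) (lt_of_not_ge hlt))
      obtain ⟨z, hzS, hzu, hzv⟩ := hSpre (ball 0 ε) (closedBall 0 (ε/2))ᶜ
        isOpen_ball (isClosed_closedBall.isOpen_compl)
        (by
          intro w hwS
          rcases eq_or_ne w 0 with rfl | hw0
          · exact Or.inl (by simpa using hε)
          · right
            have : ε ≤ ‖w‖ := by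
              by_contra hlt
              exact hw0 (hisol w (hSM hwS) (lt_of_not_ge hlt))
            simp only [Set.mem_compl_iff, mem_closedBall, dist_zero_right, not_le]
            linarith)
        ⟨0, h0S, by simpa using hε⟩
        ⟨y, hyS, by
          simp only [Set.mem_compl_iff, mem_closedBall, dist_zero_right, not_le]
          linarith⟩
      have hz0 : z = 0 := hisol z (hSM hzS) (by simpa using hzu)
      rw [hz0] at hzv
      simp only [Set.mem_compl_iff, mem_closedBall, dist_zero_right, norm_zero, not_le] at hzv
      linarith
    have hπx : π x = 0 := hSsub ⟨x, hx, rfl⟩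
    have := hπV x
    rwa [hπx, sub_zero] at this
  · -- V ⊆ component
    exact (V.convex.isPreconnected).subset_connectedComponentIn V.zero_mem hVL
end

section
/- If L is a closed additive subgroup of ℝⁿ with connected component of identity L⁰, then the image of L in the quotient ℝⁿ/L⁰ is a discrete subgroup of ℝⁿ/L⁰. -/
open Filter Topology

theorem stmt_5 (n : ℕ) (L : AddSubgroup (Fin n → ℝ)) (hL : IsClosed (L : Set (Fin n → ℝ)))
    (V : Submodule ℝ (Fin n → ℝ))
    (hV : (V : Set (Fin n → ℝ)) = connectedComponentIn (L : Set (Fin n → ℝ)) 0) :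
    DiscreteTopology (L.map (QuotientAddGroup.mk' V.toAddSubgroup)) := by
  have hVL : (V : Set (Fin n → ℝ)) ⊆ L := by
    rw [hV]; exact connectedComponentIn_subset _ _
  -- Key claim: points of L close to V are in V
  have key : ∃ ε > 0, ∀ x ∈ L, ∀ v ∈ V, ‖x - v‖ < ε → x ∈ V := by
    by_contra hcon
    push_neg at hcon
    -- get a sequence
    have hseq : ∀ k : ℕ, ∃ x ∈ L, ∃ v ∈ V, ‖x - v‖ < 1 / (k + 1) ∧ x ∉ V := by
      intro k
      exact hcon (1 / (k + 1)) (by positivity)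
    choose x hxL v hvV hxv hxnV using hseq
    obtain ⟨W, hW⟩ := Submodule.exists_isCompl V
    -- projection onto W along V
    set f : (Fin n → ℝ) →ₗ[ℝ] (Fin n → ℝ) :=
      W.subtype.comp (W.projectionOnto V hW.symm) with hf
    have hfW : ∀ z, f z ∈ W := fun z => (W.projectionOnto V hW.symm z).2
    have hsub : ∀ z, z - f z ∈ V := by
      intro z
      have : (V.projectionOnto W hW z : Fin n → ℝ) + (W.projectionOnto V hW.symm z : Fin n → ℝ) = z :=
        Submodule.projection_add_projection_eq_self hW z
      have : z - f z = (V.projectionOnto W hW z : Fin n → ℝ) := by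
        rw [hf]; simp only [LinearMap.comp_apply, Submodule.subtype_apply]
        linear_combination -this
      rw [this]; exact (V.projectionOnto W hW z).2
    have hfV : ∀ z ∈ V, f z = 0 := by
      intro z hz
      rw [hf]
      simp [Submodule.projectionOnto_apply_of_mem_right hW.symm hz]
    set y : ℕ → Fin n → ℝ := fun k => f (x k) with hy
    have hyL : ∀ k, y k ∈ L := fun k => by
      have : y k = x k - (x k - f (x k)) := (sub_sub_cancel _ _).symm
      rw [this]
      exact sub_mem (hxL k) (hVL (hsub (x k)))
    have hyne : ∀ k, y k ≠ 0 := by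
      intro k h0
      apply hxnV k
      have h1 := hsub (x k)
      have h0' : f (x k) = 0 := h0
      rwa [h0', sub_zero] at h1
    have hcont : Continuous f := f.continuous_of_finiteDimensional
    have hyto : Tendsto y atTop (𝓝 0) := by
      have h1 : Tendsto (fun k => x k - v k) atTop (𝓝 0) := by
        apply squeeze_zero_norm (fun k => le_of_lt (hxv k))
        exact tendsto_one_div_add_atTop_nhds_zero_nat
      have h2 : Tendsto (fun k => f (x k - v k)) atTop (𝓝 (f 0)) :=
        (hcont.tendsto 0).comp h1
      have h3 : (fun k => f (x k - v k)) = y := by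
        funext k
        rw [map_sub, hfV (v k) (hvV k), sub_zero]
      rwa [h3, map_zero] at h2
    -- unit vectors
    set r : ℕ → ℝ := fun k => ‖y k‖ with hr
    have hrpos : ∀ k, 0 < r k := fun k => norm_pos_iff.2 (hyne k)
    set u' : ℕ → Fin n → ℝ := fun k => (r k)⁻¹ • y k with hu'
    have hu'sphere : ∀ k, u' k ∈ Metric.sphere (0 : Fin n → ℝ) 1 := by
      intro k
      simp only [Metric.mem_sphere, dist_zero_right, hu', norm_smul, norm_inv]
      show ‖‖y k‖‖⁻¹ * ‖y k‖ = 1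
      rw [norm_norm]
      exact inv_mul_cancel₀ (hrpos k).ne' 
    obtain ⟨u, husphere, φ, hφ, hu⟩ :=
      (isCompact_sphere (0 : Fin n → ℝ) 1).tendsto_subseq hu'sphere
    have hunorm : ‖u‖ = 1 := by simpa [dist_zero_right] using husphere
    have huW : u ∈ W := by
      have : IsClosed (W : Set (Fin n → ℝ)) := Submodule.closed_of_finiteDimensional W
      exact this.mem_of_tendsto hu (Filter.Eventually.of_forall fun k =>
        W.smul_mem _ (hfW (x (φ k))))
    have hrto : Tendsto (fun k => r (φ k)) atTop (𝓝 0) := by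
      have : Tendsto (fun k => y (φ k)) atTop (𝓝 0) := hyto.comp hφ.tendsto_atTop
      simpa using this.norm
    -- the whole line through u lies in L
    have hline : ∀ t : ℝ, t • u ∈ L := by
      intro t
      have hmem : ∀ k, (⌊t / r (φ k)⌋ : ℝ) • y (φ k) ∈ L := by
        intro k
        rw [Int.cast_smul_eq_zsmul]
        exact zsmul_mem (hyL (φ k)) _
      have hto : Tendsto (fun k => (⌊t / r (φ k)⌋ : ℝ) • y (φ k)) atTop (𝓝 (t • u)) := by
        have heq : ∀ k, (⌊t / r (φ k)⌋ : ℝ) • y (φ k)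
            = ((⌊t / r (φ k)⌋ : ℝ) * r (φ k)) • u' (φ k) := by
          intro k
          rw [hu', smul_smul, mul_assoc, mul_inv_cancel₀ (hrpos (φ k)).ne', mul_one]
        simp only [heq]
        have hscal : Tendsto (fun k => (⌊t / r (φ k)⌋ : ℝ) * r (φ k)) atTop (𝓝 t) := by
          have hb : Tendsto (fun k => (⌊t / r (φ k)⌋ : ℝ) * r (φ k) - t) atTop (𝓝 0) := by
            apply squeeze_zero_norm (a := fun k => r (φ k)) ?_ hrto
            intro k
            have hp := hrpos (φ k)
            have ht : t / r (φ k) * r (φ k) = t := div_mul_cancel₀ t hp.ne'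
            show |↑⌊t / r (φ k)⌋ * r (φ k) - t| ≤ r (φ k)
            rw [abs_le]
            constructor
            · have h1 : t / r (φ k) - 1 ≤ (⌊t / r (φ k)⌋ : ℝ) :=
                le_of_lt (Int.sub_one_lt_floor _)
              nlinarith [mul_le_mul_of_nonneg_right h1 hp.le, ht]
            · have h2 : (⌊t / r (φ k)⌋ : ℝ) ≤ t / r (φ k) := Int.floor_le _
              nlinarith [mul_le_mul_of_nonneg_right h2 hp.le, ht]
          have := hb.add_const t
          simpa using this
        exact hscal.smul hu
      exact hL.mem_of_tendsto hto (Filter.Eventually.of_forall hmem)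
    -- the line is connected, hence inside V
    have hlineV : ∀ t : ℝ, t • u ∈ V := by
      have hconn : IsPreconnected (Set.range fun t : ℝ => t • u) := by
        rw [← Set.image_univ]
        exact isPreconnected_univ.image _
          ((continuous_id.smul continuous_const).continuousOn)
      have hsubV : (Set.range fun t : ℝ => t • u) ⊆ V := by
        rw [hV]
        exact hconn.subset_connectedComponentIn ⟨0, zero_smul ℝ u⟩
          (Set.range_subset_iff.2 hline)
      intro t
      exact hsubV ⟨t, rfl⟩
    have huV : u ∈ V := by simpa using hlineV 1
    have : u = 0 := (Submodule.disjoint_def.1 hW.disjoint) u huV huW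
    rw [this, norm_zero] at hunorm
    exact zero_ne_one hunorm
  -- conclude discreteness
  obtain ⟨ε, hε, hkey⟩ := key
  rw [discreteTopology_iff_isOpen_singleton_zero, isOpen_induced_iff]
  refine ⟨(QuotientAddGroup.mk' V.toAddSubgroup) '' (Metric.ball 0 ε), ?_, ?_⟩
  · exact QuotientAddGroup.isOpenMap_coe _ Metric.isOpen_ball
  · ext z
    simp only [Set.mem_preimage, Set.mem_singleton_iff]
    constructor
    · rintro ⟨b, hb, hbz⟩
      obtain ⟨w, hwL, hwz⟩ := z.2
      apply Subtype.ext
      show (z : (Fin n → ℝ) ⧸ V.toAddSubgroup) = 0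
      rw [← hwz, QuotientAddGroup.mk'_apply, QuotientAddGroup.eq_zero_iff]
      have hsub : w - b ∈ V := by
        have hbw : (b : (Fin n → ℝ) ⧸ V.toAddSubgroup) = (w : (Fin n → ℝ) ⧸ V.toAddSubgroup) := by
          rw [← QuotientAddGroup.mk'_apply, ← QuotientAddGroup.mk'_apply, hbz, hwz]
        rw [QuotientAddGroup.eq_iff_sub_mem] at hbw
        simpa using (neg_mem hbw : -(b - w) ∈ V.toAddSubgroup)
      have hb' : ‖w - (w - b)‖ < ε := by
        simpa using mem_ball_zero_iff.1 hb
      exact hkey w hwL (w - b) hsub hb'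
    · rintro rfl
      exact ⟨0, Metric.mem_ball_self hε, by simp⟩
end

section
/- If L is an additive subgroup of ℝⁿ with topological closure L̄, and L̄⁰ is the connected component of 0 in L̄, then L ∩ L̄⁰ is dense in L̄⁰. -/
open Filter Topology Metric Set

/-- A closed additive subgroup of `ℝⁿ` admitting a sequence of nonzero elements tending to `0`
contains a full line. -/
lemma key_line {n : ℕ} (H : AddSubgroup (Fin n → ℝ)) (hH : IsClosed (H : Set (Fin n → ℝ)))
    (h : ℕ → Fin n → ℝ) (hmem : ∀ k, h k ∈ H) (hne : ∀ k, h k ≠ 0)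
    (hlim : Tendsto h atTop (𝓝 0)) :
    ∃ u : Fin n → ℝ, u ≠ 0 ∧ ∀ t : ℝ, t • u ∈ H := by
  set u : ℕ → Fin n → ℝ := fun k => ‖h k‖⁻¹ • h k with hu
  have hnorm : ∀ k, ‖h k‖ ≠ 0 := fun k => norm_ne_zero_iff.2 (hne k)
  have husphere : ∀ k, u k ∈ sphere (0 : Fin n → ℝ) 1 := by
    intro k
    simp [u, norm_smul, inv_mul_cancel₀ (hnorm k)]
  obtain ⟨v, hv, φ, hφ, hconv⟩ :=
    (isCompact_sphere (0 : Fin n → ℝ) 1).tendsto_subseq husphere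
  refine ⟨v, ?_, ?_⟩
  · intro h0
    rw [h0] at hv
    simp at hv
  intro t
  set r : ℕ → ℝ := fun k => ‖h (φ k)‖ with hr
  have hrpos : ∀ k, 0 < r k := fun k => lt_of_le_of_ne (norm_nonneg _) (Ne.symm (hnorm (φ k)))
  have hr0 : Tendsto r atTop (𝓝 0) := by
    have := (hlim.comp hφ.tendsto_atTop).norm
    simpa using this
  have hscal : Tendsto (fun k => (⌊t / r k⌋ : ℝ) * r k) atTop (𝓝 t) := by
    apply tendsto_of_tendsto_of_tendsto_of_le_of_le
      (g := fun k => t - r k) (h := fun _ => t)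
    · simpa using (tendsto_const_nhds.sub hr0)
    · exact tendsto_const_nhds
    · intro k
      have h1 := Int.lt_floor_add_one (t / r k)
      have h2 := hrpos k
      have : t / r k * r k < (⌊t / r k⌋ + 1) * r k := by
        exact mul_lt_mul_of_pos_right h1 h2
      rw [div_mul_cancel₀ _ (ne_of_gt h2)] at this
      linarith
    · intro k
      have h1 := Int.floor_le (t / r k)
      have h2 := hrpos k
      have : (⌊t / r k⌋ : ℝ) * r k ≤ t / r k * r k := mul_le_mul_of_nonneg_right h1 h2.le
      rwa [div_mul_cancel₀ _ (ne_of_gt h2)] at this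
  have hten : Tendsto (fun k => ((⌊t / r k⌋ : ℝ) * r k) • u (φ k)) atTop (𝓝 (t • v)) := by
    exact hscal.smul hconv
  refine hH.mem_of_tendsto hten (Eventually.of_forall fun k => ?_)
  have heq : ((⌊t / r k⌋ : ℝ) * r k) • u (φ k) = (⌊t / r k⌋ : ℤ) • h (φ k) := by
    rw [mul_smul, hu]
    rw [smul_inv_smul₀ (hnorm (φ k))]
    rw [Int.cast_smul_eq_zsmul]
  rw [heq]
  exact zsmul_mem (hmem (φ k)) _

theorem stmt_6 (n : ℕ) (L : AddSubgroup (Fin n → ℝ)) :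
    connectedComponentIn (closure (L : Set (Fin n → ℝ))) 0 ⊆
      closure ((L : Set (Fin n → ℝ)) ∩
        connectedComponentIn (closure (L : Set (Fin n → ℝ))) 0) := by
  classical
  set G : AddSubgroup (Fin n → ℝ) := L.topologicalClosure with hGdef
  have hGset : (G : Set (Fin n → ℝ)) = closure (L : Set (Fin n → ℝ)) := rfl
  have hGclosed : IsClosed (G : Set (Fin n → ℝ)) := by
    rw [hGset]; exact isClosed_closure
  -- the maximal linear subspace contained in G
  set V : Submodule ℝ (Fin n → ℝ) :=
    { carrier := {x | ∀ t : ℝ, t • x ∈ G}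
      add_mem' := fun {a b} ha hb t => by simpa [smul_add] using add_mem (ha t) (hb t)
      zero_mem' := fun t => by simpa using G.zero_mem
      smul_mem' := fun c {x} hx t => by simpa [smul_smul] using hx (t * c) } with hVdef
  have hVmem : ∀ x, x ∈ V ↔ ∀ t : ℝ, t • x ∈ G := fun x => Iff.rfl
  have hVG : (V : Set (Fin n → ℝ)) ⊆ (G : Set (Fin n → ℝ)) := by
    intro x hx
    simpa using (hVmem x).1 hx 1
  -- openness of V in G near 0
  have hopen : ∃ ε > 0, ∀ g ∈ G, ‖g‖ < ε → g ∈ V := by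
    by_contra hc
    push_neg at hc
    choose g hgG hgn hgV using fun k : ℕ => hc (1 / (k + 1)) (by positivity)
    obtain ⟨W, hW⟩ := V.exists_isCompl
    set p : (Fin n → ℝ) →ₗ[ℝ] (Fin n → ℝ) := V.subtype.comp (V.linearProjOfIsCompl W hW)
      with hpdef
    have hpcont : Continuous p := p.continuous_of_finiteDimensional
    have hpV : ∀ x, p x ∈ V := fun x => Submodule.coe_mem _
    set w : ℕ → Fin n → ℝ := fun k => g k - p (g k) with hwdef
    have hwW : ∀ k, w k ∈ W := by
      intro k
      have h1 : (V.linearProjOfIsCompl W hW (g k) : Fin n → ℝ) +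
          (W.linearProjOfIsCompl V hW.symm (g k) : Fin n → ℝ) = g k :=
        Submodule.projection_add_projection_eq_self hW (g k)
      have h2 : w k = (W.linearProjOfIsCompl V hW.symm (g k) : Fin n → ℝ) := by
        simp only [hwdef, hpdef, LinearMap.comp_apply, Submodule.subtype_apply]
        linear_combination -h1
      rw [h2]
      exact Submodule.coe_mem _
    have hwG : ∀ k, w k ∈ G := fun k => sub_mem (hgG k) (hVG (hpV (g k)))
    have hwne : ∀ k, w k ≠ 0 := by
      intro k h0
      apply hgV k
      have : g k = p (g k) := by
        have := sub_eq_zero.mp h0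
        exact this
      rw [this]
      exact hpV (g k)
    have hwlim : Tendsto w atTop (𝓝 0) := by
      have hg0 : Tendsto g atTop (𝓝 0) :=
        squeeze_zero_norm (fun k => (hgn k).le) tendsto_one_div_add_atTop_nhds_zero_nat
      have hc2 : Continuous fun x : Fin n → ℝ => x - p x := continuous_id.sub hpcont
      have := (hc2.tendsto 0).comp hg0
      simpa [hwdef, Function.comp_def] using this
    obtain ⟨u, hune, hu⟩ := key_line (G ⊓ W.toAddSubgroup)
      (by
        have : ((G ⊓ W.toAddSubgroup : AddSubgroup (Fin n → ℝ)) : Set (Fin n → ℝ))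
            = (G : Set (Fin n → ℝ)) ∩ (W : Set (Fin n → ℝ)) := rfl
        rw [this]
        exact hGclosed.inter W.closed_of_finiteDimensional)
      w (fun k => ⟨hwG k, hwW k⟩) hwne hwlim
    have huV : u ∈ V := (hVmem u).2 fun t => (hu t).1
    have huW : u ∈ W := by simpa using (hu 1).2
    exact hune (Submodule.disjoint_def.mp hW.disjoint u huV huW)
  obtain ⟨ε, hεpos, hεV⟩ := hopen
  -- nearby points of G to points of V are in V
  have hnear : ∀ g ∈ closure (L : Set (Fin n → ℝ)), ∀ v ∈ V, dist g v < ε → g ∈ V := by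
    intro g hg v hv hd
    have hgG : g ∈ G := by rw [← hGset] at hg; exact hg
    have h1 : g - v ∈ V := hεV _ (sub_mem hgG (hVG hv)) (by rwa [← dist_eq_norm])
    have : g - v + v = g := by abel
    rw [← this]
    exact V.add_mem h1 hv
  have h0G : (0 : Fin n → ℝ) ∈ closure (L : Set (Fin n → ℝ)) := subset_closure L.zero_mem
  -- V is contained in the connected component
  have hVC : (V : Set (Fin n → ℝ)) ⊆
      connectedComponentIn (closure (L : Set (Fin n → ℝ))) 0 := by
    apply (V.convex.isPreconnected).subset_connectedComponentIn V.zero_mem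
    rw [← hGset]
    exact hVG
  -- the connected component is contained in V
  have hCV : connectedComponentIn (closure (L : Set (Fin n → ℝ))) 0 ⊆
      (V : Set (Fin n → ℝ)) := by
    have hVne : (V : Set (Fin n → ℝ)).Nonempty := ⟨0, V.zero_mem⟩
    have hmemlt : ∀ g ∈ closure (L : Set (Fin n → ℝ)),
        infDist g (V : Set (Fin n → ℝ)) < ε → g ∈ V := by
      intro g hg hf
      obtain ⟨v, hv, hd⟩ := (infDist_lt_iff hVne).mp hf
      exact hnear g hg v hv hd
    have hsub : connectedComponentIn (closure (L : Set (Fin n → ℝ))) 0 ⊆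
        (fun x => infDist x (V : Set (Fin n → ℝ))) ⁻¹' (Iio (ε / 2)) := by
      apply IsPreconnected.subset_left_of_subset_union
        (v := (fun x => infDist x (V : Set (Fin n → ℝ))) ⁻¹' (Ioi (ε / 2)))
        (isOpen_Iio.preimage (continuous_infDist_pt _))
        (isOpen_Ioi.preimage (continuous_infDist_pt _))
      · rw [Set.disjoint_left]
        intro a ha ha'
        simp only [mem_preimage, mem_Iio, mem_Ioi] at ha ha'
        linarith
      · intro x hx
        have hxG := connectedComponentIn_subset _ _ hx
        rcases lt_or_ge (infDist x (V : Set (Fin n → ℝ))) ε with hlt | hge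
        · have hxV : x ∈ V := hmemlt x hxG hlt
          left
          simp only [mem_preimage, mem_Iio]
          rw [infDist_zero_of_mem hxV]
          linarith
        · right
          simp only [mem_preimage, mem_Ioi]
          exact lt_of_lt_of_le (half_lt_self hεpos) hge
      · refine ⟨0, mem_connectedComponentIn h0G, ?_⟩
        simp only [mem_preimage, mem_Iio]
        rw [infDist_zero_of_mem (V.zero_mem)]
        linarith
      · exact isPreconnected_connectedComponentIn
    intro x hx
    have hxlt := hsub hx
    simp only [mem_preimage, mem_Iio] at hxlt
    exact hmemlt x (connectedComponentIn_subset _ _ hx) (by linarith)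
  -- conclusion
  intro x hx
  have hxV : x ∈ V := hCV hx
  rw [Metric.mem_closure_iff]
  intro δ hδ
  have hxG : x ∈ closure (L : Set (Fin n → ℝ)) := by rw [← hGset]; exact hVG hxV
  obtain ⟨l, hlL, hld⟩ := Metric.mem_closure_iff.mp hxG (min ε δ) (lt_min hεpos hδ)
  refine ⟨l, ⟨hlL, ?_⟩, lt_of_lt_of_le hld (min_le_right _ _)⟩
  apply hVC
  exact hnear l (subset_closure hlL) x hxV
    (by rw [dist_comm]; exact lt_of_lt_of_le hld (min_le_left _ _))
end
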